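/- For every integer d ≥ 1, the sum of the squared cosecants at the d-th division points of π satisfies ∑_{h=1}^{d-1} (1 / sin(hπ/d))² = (d² − 1)/3. -/

import Mathlib

open Real Finset

lemma aux_geom (x : ℂ) (n : ℕ) :
    (1 - x) * ∑ k ∈ Finset.range n, ((k : ℂ) + 1) * x ^ k
      = (∑ k ∈ Finset.range n, x ^ k) - n * x ^ n := by
  induction n with
  | zero => simp
  | succ n ih =>
    rw [Finset.sum_range_succ, Finset.sum_range_succ]
    push_cast
    linear_combination ih

lemma aux_L (n : ℕ) :
    ∑ j ∈ Finset.range n, ((j : ℂ) + 1) = n * (n + 1) / 2 := by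
  induction n with
  | zero => simp
  | succ n ih =>
    rw [Finset.sum_range_succ, ih]
    push_cast
    ring

lemma aux_C (n : ℕ) :
    ∑ j ∈ Finset.range n, ((j : ℂ) + 1) * ((n : ℂ) - j)
      = n * (n + 1) * (n + 2) / 6 := by
  induction n with
  | zero => simp
  | succ n ih =>
    have h1 : ∀ j ∈ Finset.range (n + 1),
        ((j : ℂ) + 1) * (((n + 1 : ℕ) : ℂ) - j)
          = ((j : ℂ) + 1) * ((n : ℂ) - j) + ((j : ℂ) + 1) := by
      intro j _; push_cast; ring
    rw [Finset.sum_congr rfl h1, Finset.sum_add_distrib, Finset.sum_range_succ, ih,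
      aux_L (n + 1)]
    push_cast
    ring

theorem sum_cosec_sq (d : ℕ) (hd : 1 ≤ d) :
    ∑ h ∈ Finset.Ico 1 d, (1 / Real.sin (h * Real.pi / d)) ^ 2
      = ((d : ℝ) ^ 2 - 1) / 3 := by
  have hd0 : (d : ℂ) ≠ 0 := Nat.cast_ne_zero.mpr (by omega)
  set ζ : ℂ := Complex.exp (2 * Real.pi * Complex.I / d) with hζdef
  have hprim : IsPrimitiveRoot ζ d := Complex.isPrimitiveRoot_exp d (by omega)
  have hroot : ∀ m : ℕ, ∑ h ∈ Finset.Ico 1 d, (ζ ^ m) ^ h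
      = (if d ∣ m then (d : ℂ) else 0) - 1 := by
    intro m
    have hins : Finset.range d = insert 0 (Finset.Ico 1 d) := by
      ext x; simp [Finset.mem_Ico]; omega
    have h0 : (0 : ℕ) ∉ Finset.Ico 1 d := by simp
    have hsum : ∑ h ∈ Finset.range d, (ζ ^ m) ^ h
        = 1 + ∑ h ∈ Finset.Ico 1 d, (ζ ^ m) ^ h := by
      rw [hins, Finset.sum_insert h0, pow_zero]
    by_cases hdvd : d ∣ m
    · rw [if_pos hdvd]
      have h1 : ζ ^ m = 1 := (hprim.pow_eq_one_iff_dvd m).mpr hdvd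
      rw [h1]
      simp only [one_pow, Finset.sum_const, Nat.card_Ico, nsmul_eq_mul, mul_one]
      rw [Nat.cast_sub hd, Nat.cast_one]
    · rw [if_neg hdvd]
      have hne : ζ ^ m ≠ 1 := fun hh => hdvd ((hprim.pow_eq_one_iff_dvd m).mp hh)
      have hpow : (ζ ^ m) ^ d = 1 := by
        rw [← pow_mul]
        exact (hprim.pow_eq_one_iff_dvd (m * d)).mpr ⟨m, by ring⟩
      rw [geom_sum_eq hne d, hpow, sub_self, zero_div] at hsum
      linear_combination -hsum
  have key : ∀ h ∈ Finset.Ico 1 d,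
      ((1 / Real.sin (h * Real.pi / d) : ℝ) : ℂ) ^ 2
        = -4 * (∑ j ∈ Finset.range d, ((j : ℂ) + 1) * (ζ ^ h) ^ j) ^ 2 * ζ ^ h
            / (d : ℂ) ^ 2 := by
    intro h hh
    have hh' := Finset.mem_Ico.mp hh
    set x : ℝ := h * Real.pi / d with hx
    have hdR : (0 : ℝ) < d := by
      have : 0 < d := by omega
      exact_mod_cast this
    have hhR : (0 : ℝ) < h := by exact_mod_cast hh'.1
    have hx0 : 0 < x := div_pos (mul_pos hhR Real.pi_pos) hdR
    have hxlt : x < Real.pi := by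
      rw [hx, div_lt_iff₀ hdR]
      have hπ := Real.pi_pos
      have hhd : (h : ℝ) < d := by exact_mod_cast hh'.2
      nlinarith
    have hs : Real.sin x ≠ 0 := ne_of_gt (Real.sin_pos_of_pos_of_lt_pi hx0 hxlt)
    have hsC : ((Real.sin x : ℝ) : ℂ) ≠ 0 := Complex.ofReal_ne_zero.mpr hs
    set w : ℂ := Complex.exp (x * Complex.I) with hw
    set w' : ℂ := Complex.exp (-x * Complex.I) with hw'
    have hww' : w * w' = 1 := by
      rw [hw, hw', ← Complex.exp_add,
        show (x : ℂ) * Complex.I + -x * Complex.I = 0 by ring, Complex.exp_zero]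
    have hωw : ζ ^ h = w ^ 2 := by
      rw [hζdef, ← Complex.exp_nat_mul, hw, sq, ← Complex.exp_add]
      congr 1
      rw [hx]
      push_cast
      field_simp
      ring
    have hsin : ((Real.sin x : ℝ) : ℂ) = (w' - w) * Complex.I / 2 := by
      rw [Complex.ofReal_sin]
      linear_combination (Complex.two_sin (x : ℂ)) / 2
    have e1 : (1 - ζ ^ h) ^ 2 = -4 * ζ ^ h * ((Real.sin x : ℝ) : ℂ) ^ 2 := by
      rw [hωw, hsin]
      linear_combination (w ^ 2 * (w' - w) ^ 2) * Complex.I_sq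
        - (1 + w * w' - 2 * w ^ 2) * hww'
    have hωne : ζ ^ h ≠ 1 := hprim.pow_ne_one_of_pos_of_lt (by omega) hh'.2
    have hωd : (ζ ^ h) ^ d = 1 := by
      rw [← pow_mul]
      exact (hprim.pow_eq_one_iff_dvd (h * d)).mpr ⟨h, by ring⟩
    have hgeo : ∑ k ∈ Finset.range d, (ζ ^ h) ^ k = 0 := by
      rw [geom_sum_eq hωne, hωd, sub_self, zero_div]
    have e2 : (1 - ζ ^ h) * (∑ j ∈ Finset.range d, ((j : ℂ) + 1) * (ζ ^ h) ^ j)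
        = -(d : ℂ) := by
      rw [aux_geom (ζ ^ h) d, hgeo, hωd]
      ring
    set r : ℂ := ∑ j ∈ Finset.range d, ((j : ℂ) + 1) * (ζ ^ h) ^ j with hr
    rw [Complex.ofReal_div, Complex.ofReal_one, div_pow, one_pow,
      div_eq_div_iff (pow_ne_zero 2 hsC) (pow_ne_zero 2 hd0)]
    linear_combination r ^ 2 * e1 + ((d : ℂ) - r * (1 - ζ ^ h)) * e2
  have expand : ∀ h : ℕ,
      (∑ j ∈ Finset.range d, ((j : ℂ) + 1) * (ζ ^ h) ^ j) ^ 2 * ζ ^ h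
        = ∑ j ∈ Finset.range d, ∑ k ∈ Finset.range d,
            (((j : ℂ) + 1) * ((k : ℂ) + 1)) * (ζ ^ (j + k + 1)) ^ h := by
    intro h
    rw [sq, Finset.sum_mul_sum, Finset.sum_mul]
    refine Finset.sum_congr rfl fun j _ => ?_
    rw [Finset.sum_mul]
    refine Finset.sum_congr rfl fun k _ => ?_
    have hpow : (ζ ^ (j + k + 1)) ^ h = (ζ ^ h) ^ j * (ζ ^ h) ^ k * ζ ^ h := by
      simp only [← pow_mul, ← pow_add]
      congr 1
      ring
    rw [hpow]
    ring
  have hif : ∀ j ∈ Finset.range d,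
      ∑ k ∈ Finset.range d, ((k : ℂ) + 1) * (if d ∣ (j + k + 1) then (d : ℂ) else 0)
        = ((d : ℂ) - j) * d := by
    intro j hj
    have hjd := Finset.mem_range.mp hj
    rw [Finset.sum_eq_single (d - 1 - j)]
    · rw [if_pos (show d ∣ (j + (d - 1 - j) + 1) from ⟨1, by omega⟩)]
      have hcast : ((d - 1 - j : ℕ) : ℂ) = (d : ℂ) - 1 - j := by
        rw [Nat.sub_sub, Nat.cast_sub (by omega : 1 + j ≤ d)]
        push_cast
        ring
      rw [hcast]
      ring
    · intro k hk hkne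
      have hkd := Finset.mem_range.mp hk
      rw [if_neg, mul_zero]
      rintro ⟨q, hq⟩
      have hq2 : q < 2 := by
        by_contra hc
        have : d * 2 ≤ d * q := Nat.mul_le_mul_left d (by omega)
        omega
      interval_cases q <;> omega
    · intro hnot
      exact absurd (Finset.mem_range.mpr (by omega)) hnot
  rw [← Complex.ofReal_inj, Complex.ofReal_sum]
  simp only [Complex.ofReal_pow]
  rw [Finset.sum_congr rfl key]
  have estep : ∀ h ∈ Finset.Ico 1 d,
      -4 * (∑ j ∈ Finset.range d, ((j : ℂ) + 1) * (ζ ^ h) ^ j) ^ 2 * ζ ^ h / (d : ℂ) ^ 2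
        = (-4 / (d : ℂ) ^ 2) * ∑ j ∈ Finset.range d, ∑ k ∈ Finset.range d,
            (((j : ℂ) + 1) * ((k : ℂ) + 1)) * (ζ ^ (j + k + 1)) ^ h := by
    intro h _
    rw [← expand h]
    ring
  rw [Finset.sum_congr rfl estep, ← Finset.mul_sum, Finset.sum_comm]
  have e2' : ∀ j ∈ Finset.range d,
      ∑ h ∈ Finset.Ico 1 d, ∑ k ∈ Finset.range d,
          (((j : ℂ) + 1) * ((k : ℂ) + 1)) * (ζ ^ (j + k + 1)) ^ h
        = ((j : ℂ) + 1) * (((d : ℂ) - j) * d)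
            - ((j : ℂ) + 1) * ((d : ℂ) * ((d : ℂ) + 1) / 2) := by
    intro j hj
    rw [Finset.sum_comm]
    have h1 : ∀ k ∈ Finset.range d,
        ∑ h ∈ Finset.Ico 1 d, (((j : ℂ) + 1) * ((k : ℂ) + 1)) * (ζ ^ (j + k + 1)) ^ h
          = ((j : ℂ) + 1) * (((k : ℂ) + 1) * (if d ∣ (j + k + 1) then (d : ℂ) else 0))
              - ((j : ℂ) + 1) * ((k : ℂ) + 1) := by
      intro k _
      rw [← Finset.mul_sum, hroot (j + k + 1)]
      ring
    rw [Finset.sum_congr rfl h1, Finset.sum_sub_distrib, ← Finset.mul_sum, hif j hj,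
      ← Finset.mul_sum, aux_L d]
  rw [Finset.sum_congr rfl e2', Finset.sum_sub_distrib]
  have e3 : ∀ j ∈ Finset.range d,
      ((j : ℂ) + 1) * (((d : ℂ) - j) * d) = (d : ℂ) * (((j : ℂ) + 1) * ((d : ℂ) - j)) := by
    intro j _
    ring
  rw [Finset.sum_congr rfl e3, ← Finset.mul_sum, aux_C d, ← Finset.sum_mul, aux_L d]
  push_cast
  field_simp
  ring
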